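/- arXiv:2502.14392 — 2 statements merged into one kernel-verified Lean document; each statement's English description precedes it below -/
import Mathlib

section
/- Every minimally rigid ℤ²⋊Cs-gain graph is ℤ²⋊Cs-tight. -/
namespace Crystal

/-- The wallpaper group `pm = ℤ² ⋊ 𝒞ₛ`.  An element is a pair of a translation
vector `t ∈ ℤ²` and a Boolean `r` recording the `𝒞ₛ`-component
(`true` = the reflection `s` in the x-axis). -/
@[ext] structure PM : Type where
  t : ℤ × ℤ
  r : Bool

namespace PM

/-- The action of the reflection component on translation vectors. -/
def act (σ : Bool) (z : ℤ × ℤ) : ℤ × ℤ := (z.1, if σ then -z.2 else z.2)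

instance : Mul PM := ⟨fun a b => ⟨a.t + act a.r b.t, xor a.r b.r⟩⟩
instance : One PM := ⟨⟨0, false⟩⟩
instance : Inv PM := ⟨fun a => ⟨act a.r (-a.t), a.r⟩⟩

lemma mul_def (a b : PM) : a * b = ⟨a.t + act a.r b.t, xor a.r b.r⟩ := rfl
lemma one_def : (1 : PM) = ⟨0, false⟩ := rfl
lemma inv_def (a : PM) : a⁻¹ = ⟨act a.r (-a.t), a.r⟩ := rfl

instance : Group PM where
  mul_assoc a b c := by
    obtain ⟨⟨x1, x2⟩, ra⟩ := a
    obtain ⟨⟨y1, y2⟩, rb⟩ := b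
    obtain ⟨⟨z1, z2⟩, rc⟩ := c
    cases ra <;> cases rb <;> cases rc <;>
      simp [mul_def, act, Prod.ext_iff] <;> omega
  one_mul a := by
    obtain ⟨⟨x1, x2⟩, ra⟩ := a
    cases ra <;> simp [mul_def, one_def, act]
  mul_one a := by
    obtain ⟨⟨x1, x2⟩, ra⟩ := a
    cases ra <;> simp [mul_def, one_def, act]
  inv_mul_cancel a := by
    obtain ⟨⟨x1, x2⟩, ra⟩ := a
    cases ra <;> simp [mul_def, one_def, inv_def, act, Prod.ext_iff]

/-- The affine action of `pm` on the plane: `(z,σ)·x = σ(x) + z`. -/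
noncomputable def toPlane (g : PM) (x : ℝ × ℝ) : ℝ × ℝ :=
  (x.1 + (g.t.1 : ℝ), (if g.r then -x.2 else x.2) + (g.t.2 : ℝ))

end PM

/-- A multigraph: a finite vertex set, a finite edge set, and two endpoint maps
(which also fix a reference orientation of every edge, from `fst` to `snd`).
Loops and parallel edges are allowed. -/
structure Multigraph (α β : Type) where
  verts : Finset α
  edges : Finset β
  fst : β → α
  snd : β → α
  fst_mem : ∀ e ∈ edges, fst e ∈ verts
  snd_mem : ∀ e ∈ edges, snd e ∈ verts

variable {α β : Type}

/-- `H` is a subgraph of `G`. -/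
def IsSubgraph (H G : Multigraph α β) : Prop :=
  H.verts ⊆ G.verts ∧ H.edges ⊆ G.edges ∧
    ∀ e ∈ H.edges, H.fst e = G.fst e ∧ H.snd e = G.snd e

/-- `(k,l)`-sparsity. -/
def Sparse (k l : ℕ) (G : Multigraph α β) : Prop :=
  ∀ H : Multigraph α β, IsSubgraph H G → 1 ≤ H.edges.card →
    (H.edges.card : ℤ) ≤ k * H.verts.card - l

/-- `(k,l)`-tightness. -/
def Tight (k l : ℕ) (G : Multigraph α β) : Prop :=
  Sparse k l G ∧ (G.edges.card : ℤ) = k * G.verts.card - l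

/-- The degree of a vertex: the number of edge-incidences, loops counting twice. -/
def Multigraph.degree [DecidableEq α] (G : Multigraph α β) (v : α) : ℕ :=
  ∑ e ∈ G.edges, ((if G.fst e = v then 1 else 0) + (if G.snd e = v then 1 else 0))

/-- The starting vertex of a step `(e, dir)` of a walk: `dir = true` means the
edge is traversed forwards. -/
def stepHead (G : Multigraph α β) (s : β × Bool) : α := if s.2 then G.fst s.1 else G.snd s.1

/-- The final vertex of a step of a walk. -/
def stepTail (G : Multigraph α β) (s : β × Bool) : α := if s.2 then G.snd s.1 else G.fst s.1

/-- `IsWalk G u v L` : `L` is a walk in `G` from `u` to `v`. -/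
def IsWalk (G : Multigraph α β) : α → α → List (β × Bool) → Prop
  | u, v, [] => u = v
  | u, v, s :: L => s.1 ∈ G.edges ∧ stepHead G s = u ∧ IsWalk G (stepTail G s) v L

/-- The net gain of a walk. -/
def walkGain (m : β → PM) (L : List (β × Bool)) : PM :=
  (L.map fun s => if s.2 then m s.1 else (m s.1)⁻¹).prod

/-- A gain graph is balanced if every closed walk has identity net gain. -/
def Balanced (G : Multigraph α β) (m : β → PM) : Prop :=
  ∀ u L, IsWalk G u u L → walkGain m L = 1

/-- A gain graph is purely periodic if every closed walk has net gain in the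
translation subgroup `ℤ²`. -/
def PurelyPeriodic (G : Multigraph α β) (m : β → PM) : Prop :=
  ∀ u L, IsWalk G u u L → (walkGain m L).r = false

/-- A multigraph is connected if every pair of its vertices is joined by a walk. -/
def Connected (G : Multigraph α β) : Prop :=
  ∀ u ∈ G.verts, ∀ v ∈ G.verts, ∃ L, IsWalk G u v L

/-- The conditions for `m` to be a gain assignment on `G`: parallel edges with the
same orientation get distinct gains, and loops get non-identity gains. -/
structure IsGainGraph (G : Multigraph α β) (m : β → PM) : Prop where
  parallel_ne : ∀ e ∈ G.edges, ∀ f ∈ G.edges,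
    e ≠ f → G.fst e = G.fst f → G.snd e = G.snd f → m e ≠ m f
  loop_ne_one : ∀ e ∈ G.edges, G.fst e = G.snd e → m e ≠ 1

/-- `ℤ²⋊𝒞ₛ`-tightness of a gain graph. -/
def PMTight (G : Multigraph α β) (m : β → PM) : Prop :=
  Tight 2 1 G ∧
    (∀ H : Multigraph α β, IsSubgraph H G → PurelyPeriodic H m → Sparse 2 2 H) ∧
    (∀ H : Multigraph α β, IsSubgraph H G → Balanced H m → Sparse 2 3 H)

/-- The orbit rigidity matrix of a `ℤ²⋊𝒞ₛ`-gain framework. -/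
noncomputable def orbitMatrix [DecidableEq α] (G : Multigraph α β) (m : β → PM)
    (p : α → ℝ × ℝ) :
    Matrix {e : β // e ∈ G.edges} ({v : α // v ∈ G.verts} × Fin 2) ℝ :=
  fun er vc =>
    let e : β := er.1
    let i : α := G.fst e
    let j : α := G.snd e
    let w : α := vc.1.1
    let entry : ℝ × ℝ :=
      if i = j then
        (if w = i then p i + p i - PM.toPlane (m e) (p i) - PM.toPlane (m e)⁻¹ (p i) else 0)
      else if w = i then p i - PM.toPlane (m e) (p j)
      else if w = j then p j - PM.toPlane (m e)⁻¹ (p i)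
      else 0
    if vc.2 = 0 then entry.1 else entry.2

/-- A configuration is generic if its orbit rigidity matrix has the maximum
possible rank among all configurations. -/
def Generic [DecidableEq α] (G : Multigraph α β) (m : β → PM) (p : α → ℝ × ℝ) : Prop :=
  ∀ q : α → ℝ × ℝ, (orbitMatrix G m q).rank ≤ (orbitMatrix G m p).rank

/-- A gain graph is rigid if the orbit rigidity matrix of a generic configuration
has rank `2|V| - 1`. -/
def Rigid [DecidableEq α] (G : Multigraph α β) (m : β → PM) : Prop :=
  ∃ p : α → ℝ × ℝ, Generic G m p ∧
    ((orbitMatrix G m p).rank : ℤ) = 2 * G.verts.card - 1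

/-- A gain graph is independent if the rows of the orbit rigidity matrix of a
generic configuration are linearly independent. -/
def Independent [DecidableEq α] (G : Multigraph α β) (m : β → PM) : Prop :=
  ∃ p : α → ℝ × ℝ, Generic G m p ∧
    LinearIndependent ℝ (fun er => orbitMatrix G m p er)

/-- A gain graph is minimally rigid if it is rigid and independent. -/
def MinimallyRigid [DecidableEq α] (G : Multigraph α β) (m : β → PM) : Prop :=
  Rigid G m ∧ Independent G m

/-- `e` joins `u` and `v` (in one of the two orientations). -/
def Joins (G : Multigraph α β) (e : β) (u v : α) : Prop :=
  (G.fst e = u ∧ G.snd e = v) ∨ (G.fst e = v ∧ G.snd e = u)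

/-- The gain of an edge read with `v` as its initial vertex (inverting the gain
if the edge is oriented towards `v`). -/
def gainFrom [DecidableEq α] (G : Multigraph α β) (m : β → PM) (v : α) (e : β) : PM :=
  if G.fst e = v then m e else (m e)⁻¹

/-- The endpoint of an edge other than `v` (for an edge incident with `v`). -/
def otherEnd [DecidableEq α] (G : Multigraph α β) (v : α) (e : β) : α :=
  if G.fst e = v then G.snd e else G.fst e

/-- Deletion of a vertex together with all edges incident with it. -/
def Multigraph.deleteVertex [DecidableEq α] (G : Multigraph α β) (v : α) :
    Multigraph α β where
  verts := G.verts.erase v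
  edges := G.edges.filter fun e => G.fst e ≠ v ∧ G.snd e ≠ v
  fst := G.fst
  snd := G.snd
  fst_mem := fun e he => by
    rw [Finset.mem_filter] at he
    exact Finset.mem_erase.2 ⟨he.2.1, G.fst_mem e he.1⟩
  snd_mem := fun e he => by
    rw [Finset.mem_filter] at he
    exact Finset.mem_erase.2 ⟨he.2.2, G.snd_mem e he.1⟩

/-- Addition of a new edge `f` from `u` to `v`. -/
def Multigraph.addEdge [DecidableEq α] [DecidableEq β] (G : Multigraph α β)
    (f : β) (u v : α) : Multigraph α β where
  verts := insert u (insert v G.verts)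
  edges := insert f G.edges
  fst := Function.update G.fst f u
  snd := Function.update G.snd f v
  fst_mem := fun e he => by
    by_cases hef : e = f
    · subst hef; simp
    · rw [Function.update_of_ne hef]
      have heG : e ∈ G.edges := by
        rcases Finset.mem_insert.1 he with h | h
        · exact absurd h hef
        · exact h
      exact Finset.mem_insert_of_mem (Finset.mem_insert_of_mem (G.fst_mem e heG))
  snd_mem := fun e he => by
    by_cases hef : e = f
    · subst hef; simp
    · rw [Function.update_of_ne hef]
      have heG : e ∈ G.edges := by
        rcases Finset.mem_insert.1 he with h | h
        · exact absurd h hef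
        · exact h
      exact Finset.mem_insert_of_mem (Finset.mem_insert_of_mem (G.snd_mem e heG))

/-- `(G',m')` is obtained from `(G,m)` by a gained 0-extension. -/
def IsZeroExtension [DecidableEq α] [DecidableEq β] (G : Multigraph α β) (m : β → PM)
    (G' : Multigraph α β) (m' : β → PM) : Prop :=
  ∃ v₀ v₁ v₂ f₁ f₂, v₀ ∉ G.verts ∧ v₁ ∈ G.verts ∧ v₂ ∈ G.verts ∧
    f₁ ∉ G.edges ∧ f₂ ∉ G.edges ∧ f₁ ≠ f₂ ∧
    G'.verts = insert v₀ G.verts ∧ G'.edges = insert f₁ (insert f₂ G.edges) ∧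
    (∀ e ∈ G.edges, G'.fst e = G.fst e ∧ G'.snd e = G.snd e ∧ m' e = m e) ∧
    Joins G' f₁ v₀ v₁ ∧ Joins G' f₂ v₀ v₂ ∧
    IsGainGraph G' m'

/-- `(G',m')` is obtained from `(G,m)` by a gained 1-extension. -/
def IsOneExtension [DecidableEq α] [DecidableEq β] (G : Multigraph α β) (m : β → PM)
    (G' : Multigraph α β) (m' : β → PM) : Prop :=
  ∃ v₀ v₃ e f₁ f₂ f₃, v₀ ∉ G.verts ∧ v₃ ∈ G.verts ∧ e ∈ G.edges ∧
    f₁ ∉ G.edges.erase e ∧ f₂ ∉ G.edges.erase e ∧ f₃ ∉ G.edges.erase e ∧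
    f₁ ≠ f₂ ∧ f₁ ≠ f₃ ∧ f₂ ≠ f₃ ∧
    G'.verts = insert v₀ G.verts ∧
    G'.edges = insert f₁ (insert f₂ (insert f₃ (G.edges.erase e))) ∧
    (∀ e' ∈ G.edges.erase e, G'.fst e' = G.fst e' ∧ G'.snd e' = G.snd e' ∧ m' e' = m e') ∧
    Joins G' f₁ v₀ (G.fst e) ∧ Joins G' f₂ v₀ (G.snd e) ∧ Joins G' f₃ v₀ v₃ ∧
    (gainFrom G' m' v₀ f₁)⁻¹ * gainFrom G' m' v₀ f₂ = m e ∧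
    IsGainGraph G' m'

/-- `(G',m')` is obtained from `(G,m)` by a gained loop-1-extension. -/
def IsLoopOneExtension [DecidableEq α] [DecidableEq β] (G : Multigraph α β) (m : β → PM)
    (G' : Multigraph α β) (m' : β → PM) : Prop :=
  ∃ v₀ v₁ l f, v₀ ∉ G.verts ∧ v₁ ∈ G.verts ∧ l ∉ G.edges ∧ f ∉ G.edges ∧ l ≠ f ∧
    G'.verts = insert v₀ G.verts ∧ G'.edges = insert l (insert f G.edges) ∧
    (∀ e ∈ G.edges, G'.fst e = G.fst e ∧ G'.snd e = G.snd e ∧ m' e = m e) ∧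
    G'.fst l = v₀ ∧ G'.snd l = v₀ ∧ (m' l).r = true ∧
    Joins G' f v₀ v₁ ∧ IsGainGraph G' m'

/-- A `ℤ²⋊𝒞ₛ`-tight gain graph on `K₁¹`: a single vertex with a single loop whose
gain has non-trivial `𝒞ₛ`-component. -/
def IsTightK11 (G : Multigraph α β) (m : β → PM) : Prop :=
  ∃ v l, G.verts = {v} ∧ G.edges = {l} ∧ G.fst l = v ∧ G.snd l = v ∧ (m l).r = true


section Aux
variable {α β : Type}

@[simp] lemma PM.r_mul (a b : PM) : (a * b).r = xor a.r b.r := rfl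
@[simp] lemma PM.r_inv (a : PM) : (a⁻¹).r = a.r := rfl
@[simp] lemma PM.r_one : (1 : PM).r = false := rfl

/-- Flip the direction of a step. -/
def flipStep (s : β × Bool) : β × Bool := (s.1, !s.2)

lemma stepHead_flip (G : Multigraph α β) (s : β × Bool) :
    stepHead G (flipStep s) = stepTail G s := by
  cases s with
  | mk e b => cases b <;> simp [stepHead, stepTail, flipStep]

lemma stepTail_flip (G : Multigraph α β) (s : β × Bool) :
    stepTail G (flipStep s) = stepHead G s := by
  cases s with
  | mk e b => cases b <;> simp [stepHead, stepTail, flipStep]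

lemma isWalk_append {G : Multigraph α β} {u v w : α} {L L' : List (β × Bool)}
    (h : IsWalk G u v L) (h' : IsWalk G v w L') : IsWalk G u w (L ++ L') := by
  induction L generalizing u with
  | nil => simp only [IsWalk] at h; subst h; simpa using h'
  | cons s L ih =>
      obtain ⟨h1, h2, h3⟩ := h
      exact ⟨h1, h2, ih h3⟩

lemma isWalk_reverse {G : Multigraph α β} {u v : α} {L : List (β × Bool)}
    (h : IsWalk G u v L) : IsWalk G v u (L.reverse.map flipStep) := by
  induction L generalizing u with
  | nil => simp only [IsWalk] at h; subst h; simp [IsWalk]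
  | cons s L ih =>
      obtain ⟨h1, h2, h3⟩ := h
      have hmid : IsWalk G (stepTail G s) u [flipStep s] := by
        refine ⟨h1, stepHead_flip G s, ?_⟩
        simp only [IsWalk, stepTail_flip]
        exact h2
      have := isWalk_append (ih h3) hmid
      simpa using this

lemma walkGain_nil (m : β → PM) : walkGain m ([] : List (β × Bool)) = 1 := rfl

lemma walkGain_cons (m : β → PM) (s : β × Bool) (L : List (β × Bool)) :
    walkGain m (s :: L) = (if s.2 then m s.1 else (m s.1)⁻¹) * walkGain m L := by
  simp [walkGain]

lemma walkGain_append (m : β → PM) (L L' : List (β × Bool)) :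
    walkGain m (L ++ L') = walkGain m L * walkGain m L' := by
  simp [walkGain]

lemma walkGain_reverse (m : β → PM) (L : List (β × Bool)) :
    walkGain m (L.reverse.map flipStep) = (walkGain m L)⁻¹ := by
  induction L with
  | nil => simp [walkGain]
  | cons s L ih =>
      rw [walkGain_cons, List.reverse_cons, List.map_append, walkGain_append, ih]
      have : walkGain m [flipStep s] = (if s.2 then m s.1 else (m s.1)⁻¹)⁻¹ := by
        cases s with
        | mk e b => cases b <;> simp [walkGain, flipStep]
      simp only [List.map_cons, List.map_nil, this, mul_inv_rev]

lemma isWalk_mono {H G : Multigraph α β} (hs : IsSubgraph H G) {u v : α}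
    {L : List (β × Bool)} (h : IsWalk H u v L) : IsWalk G u v L := by
  induction L generalizing u with
  | nil => exact h
  | cons s L ih =>
      obtain ⟨h1, h2, h3⟩ := h
      have hfs := (hs.2.2 s.1 h1).1
      have hss := (hs.2.2 s.1 h1).2
      refine ⟨hs.2.1 h1, ?_, ?_⟩
      · cases s with
        | mk e b => cases b <;> simp_all [stepHead]
      · have : stepTail G s = stepTail H s := by
          cases s with
          | mk e b => cases b <;> simp_all [stepTail]
        rw [this]; exact ih h3

lemma balanced_mono {H G : Multigraph α β} {m : β → PM} (hs : IsSubgraph H G)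
    (hb : Balanced G m) : Balanced H m :=
  fun u L hL => hb u L (isWalk_mono hs hL)

lemma purelyPeriodic_mono {H G : Multigraph α β} {m : β → PM} (hs : IsSubgraph H G)
    (hb : PurelyPeriodic G m) : PurelyPeriodic H m :=
  fun u L hL => hb u L (isWalk_mono hs hL)

lemma isSubgraph_trans {K H G : Multigraph α β} (h1 : IsSubgraph K H)
    (h2 : IsSubgraph H G) : IsSubgraph K G := by
  refine ⟨h1.1.trans h2.1, h1.2.1.trans h2.2.1, fun e he => ?_⟩
  have h3 := h1.2.2 e he
  have h4 := h2.2.2 e (h1.2.1 he)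
  exact ⟨h3.1.trans h4.1, h3.2.trans h4.2⟩

end Aux
section Pot
variable {α β : Type}

/-- Reachability by walks. -/
def Reach (H : Multigraph α β) (u v : α) : Prop := ∃ L, IsWalk H u v L

lemma reach_refl (H : Multigraph α β) (u : α) : Reach H u u := ⟨[], rfl⟩

lemma reach_symm {H : Multigraph α β} {u v : α} (h : Reach H u v) : Reach H v u := by
  obtain ⟨L, hL⟩ := h
  exact ⟨_, isWalk_reverse hL⟩

lemma reach_trans {H : Multigraph α β} {u v w : α} (h : Reach H u v) (h' : Reach H v w) :
    Reach H u w := by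
  obtain ⟨L, hL⟩ := h
  obtain ⟨L', hL'⟩ := h'
  exact ⟨_, isWalk_append hL hL'⟩

/-- The setoid of walk-connectivity. -/
def reachSetoid (H : Multigraph α β) : Setoid α :=
  ⟨Reach H, ⟨reach_refl H, reach_symm, reach_trans⟩⟩

/-- A representative of the component of a vertex. -/
noncomputable def pmrep (H : Multigraph α β) (v : α) : α :=
  (Quotient.mk (reachSetoid H) v).out

lemma reach_pmrep (H : Multigraph α β) (v : α) : Reach H (pmrep H v) v :=
  @Quotient.mk_out α (reachSetoid H) v

lemma pmrep_eq_of_reach {H : Multigraph α β} {u v : α} (h : Reach H u v) :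
    pmrep H u = pmrep H v := by
  unfold pmrep
  rw [Quotient.sound (s := reachSetoid H) h]

/-- A chosen walk from the component representative to `v`. -/
noncomputable def potWalk (H : Multigraph α β) (v : α) : List (β × Bool) :=
  (reach_pmrep H v).choose

lemma potWalk_spec (H : Multigraph α β) (v : α) : IsWalk H (pmrep H v) v (potWalk H v) :=
  (reach_pmrep H v).choose_spec

/-- The potential of a vertex: the gain of the chosen walk from the representative. -/
noncomputable def pot (H : Multigraph α β) (m : β → PM) (v : α) : PM :=
  walkGain m (potWalk H v)

lemma edge_closed_walk (H : Multigraph α β) (m : β → PM) {e : β} (he : e ∈ H.edges) :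
    ∃ L, IsWalk H (pmrep H (H.fst e)) (pmrep H (H.fst e)) L ∧
      walkGain m L = pot H m (H.fst e) * m e * (pot H m (H.snd e))⁻¹ := by
  set i := H.fst e
  set j := H.snd e
  have hstep : IsWalk H i j [(e, true)] := by
    exact ⟨he, rfl, rfl⟩
  have hij : Reach H i j := ⟨_, hstep⟩
  have hrep : pmrep H i = pmrep H j := pmrep_eq_of_reach hij
  refine ⟨potWalk H i ++ ((e, true) :: ((potWalk H j).reverse.map flipStep)), ?_, ?_⟩
  · refine isWalk_append (potWalk_spec H i) ?_
    refine ⟨he, rfl, ?_⟩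
    rw [hrep]
    exact isWalk_reverse (potWalk_spec H j)
  · rw [walkGain_append]
    have : walkGain m ((e, true) :: ((potWalk H j).reverse.map flipStep)) =
        m e * (pot H m j)⁻¹ := by
      rw [walkGain_cons, walkGain_reverse]
      simp [pot]
    rw [this, ← mul_assoc]
    rfl

lemma pot_balanced {H : Multigraph α β} {m : β → PM} (hb : Balanced H m) {e : β}
    (he : e ∈ H.edges) :
    m e = (pot H m (H.fst e))⁻¹ * pot H m (H.snd e) := by
  obtain ⟨L, hL, hg⟩ := edge_closed_walk H m he
  have h1 := hb _ _ hL
  rw [hg] at h1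
  have h2 : pot H m (H.fst e) * m e = pot H m (H.snd e) := by
    rwa [mul_inv_eq_one] at h1
  rw [← h2, ← mul_assoc, inv_mul_cancel, one_mul]

lemma pot_pp {H : Multigraph α β} {m : β → PM} (hb : PurelyPeriodic H m) {e : β}
    (he : e ∈ H.edges) :
    (m e).r = xor (pot H m (H.fst e)).r (pot H m (H.snd e)).r := by
  obtain ⟨L, hL, hg⟩ := edge_closed_walk H m he
  have h1 := hb _ _ hL
  rw [hg] at h1
  simp only [PM.r_mul, PM.r_inv] at h1
  cases hi : (pot H m (H.fst e)).r <;> cases hj : (pot H m (H.snd e)).r <;>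
    simp_all

/-- A balanced subgraph of a gain graph has no loops. -/
lemma balanced_no_loop {G H : Multigraph α β} {m : β → PM} (hGm : IsGainGraph G m)
    (hs : IsSubgraph H G) (hb : Balanced H m) {e : β} (he : e ∈ H.edges) :
    H.fst e ≠ H.snd e := by
  intro hloop
  have hw : IsWalk H (H.fst e) (H.fst e) [(e, true)] := by
    refine ⟨he, rfl, ?_⟩
    simp only [IsWalk, stepTail]
    exact hloop.symm
  have h1 := hb _ _ hw
  have h2 : walkGain m [(e, true)] = m e := by simp [walkGain]
  rw [h2] at h1
  exact hGm.loop_ne_one e (hs.2.1 he)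
    (((hs.2.2 e he).1.symm.trans hloop).trans (hs.2.2 e he).2) h1

end Pot
section Rows
variable {α β : Type} [DecidableEq α]

/-- Vertex field as a column vector. -/
noncomputable def colVec (G : Multigraph α β) (Y : α → ℝ × ℝ) :
    {v // v ∈ G.verts} × Fin 2 → ℝ :=
  fun c => if c.2 = 0 then (Y c.1.1).1 else (Y c.1.1).2

/-- Dot product on the plane. -/
def dot2 (a b : ℝ × ℝ) : ℝ := a.1 * b.1 + a.2 * b.2

lemma row_support {G : Multigraph α β} (m : β → PM) (q : α → ℝ × ℝ)
    (e : {e // e ∈ G.edges}) (c : {v // v ∈ G.verts} × Fin 2)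
    (h1 : c.1.1 ≠ G.fst e.1) (h2 : c.1.1 ≠ G.snd e.1) :
    orbitMatrix G m q e c = 0 := by
  simp only [orbitMatrix]
  split_ifs <;> simp_all

lemma dot_row (G : Multigraph α β) (m : β → PM) (q : α → ℝ × ℝ)
    (e : {e // e ∈ G.edges}) (Y : α → ℝ × ℝ) :
    ∑ c : {v // v ∈ G.verts} × Fin 2, orbitMatrix G m q e c * colVec G Y c =
      if G.fst e.1 = G.snd e.1 then
        dot2 (q (G.fst e.1) + q (G.fst e.1) - PM.toPlane (m e.1) (q (G.fst e.1)) -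
          PM.toPlane (m e.1)⁻¹ (q (G.fst e.1))) (Y (G.fst e.1))
      else
        dot2 (q (G.fst e.1) - PM.toPlane (m e.1) (q (G.snd e.1))) (Y (G.fst e.1)) +
        dot2 (q (G.snd e.1) - PM.toPlane (m e.1)⁻¹ (q (G.fst e.1))) (Y (G.snd e.1)) := by
  classical
  rw [Fintype.sum_prod_type]
  by_cases hij : G.fst e.1 = G.snd e.1
  · rw [if_pos hij]
    rw [Finset.sum_eq_single (⟨G.fst e.1, G.fst_mem _ e.2⟩ : {v // v ∈ G.verts})]
    · rw [Fin.sum_univ_two]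
      simp [orbitMatrix, colVec, dot2, hij]
    · intro b _ hb
      have hb1 : b.1 ≠ G.fst e.1 := fun h => hb (Subtype.ext h)
      have hb2 : b.1 ≠ G.snd e.1 := by rw [← hij]; exact hb1
      rw [Fin.sum_univ_two,
        row_support m q e (b, 0) hb1 hb2, row_support m q e (b, 1) hb1 hb2]
      simp
    · intro h; exact absurd (Finset.mem_univ _) h
  · rw [if_neg hij]
    have hne : (⟨G.fst e.1, G.fst_mem _ e.2⟩ : {v // v ∈ G.verts}) ≠
        ⟨G.snd e.1, G.snd_mem _ e.2⟩ := fun h => hij (congrArg Subtype.val h)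
    rw [← Finset.sum_subset (Finset.subset_univ
        ({⟨G.fst e.1, G.fst_mem _ e.2⟩, ⟨G.snd e.1, G.snd_mem _ e.2⟩} :
          Finset {v // v ∈ G.verts})) ?_]
    · rw [Finset.sum_pair hne, Fin.sum_univ_two, Fin.sum_univ_two]
      simp [orbitMatrix, colVec, dot2, hij, Ne.symm hij]
    · intro x _ hx
      simp only [Finset.mem_insert, Finset.mem_singleton] at hx
      push_neg at hx
      have h1 : x.1 ≠ G.fst e.1 := fun h => hx.1 (Subtype.ext h)
      have h2 : x.1 ≠ G.snd e.1 := fun h => hx.2 (Subtype.ext h)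
      rw [Fin.sum_univ_two,
        row_support m q e (x, 0) h1 h2, row_support m q e (x, 1) h1 h2]
      simp

/-- Sign of a boolean. -/
def sgnb (b : Bool) : ℝ := if b then -1 else 1

lemma sgnb_mul_self (b : Bool) : sgnb b * sgnb b = 1 := by cases b <;> simp [sgnb]

/-- The rotational motion vector at a vertex. -/
noncomputable def uvec (g : PM) (x : ℝ × ℝ) : ℝ × ℝ :=
  (-(PM.toPlane g x).2, sgnb g.r * (PM.toPlane g x).1)

lemma id1_nonloop (γ : PM) (a b : ℝ × ℝ) :
    dot2 (a - PM.toPlane γ b) ((1 : ℝ), (0 : ℝ)) +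
    dot2 (b - PM.toPlane γ⁻¹ a) ((1 : ℝ), (0 : ℝ)) = 0 := by
  obtain ⟨⟨t1, t2⟩, r⟩ := γ
  cases r <;> simp [dot2, PM.toPlane, PM.inv_def, PM.act] <;> push_cast <;> ring

lemma id1_loop (γ : PM) (a : ℝ × ℝ) :
    dot2 (a + a - PM.toPlane γ a - PM.toPlane γ⁻¹ a) ((1 : ℝ), (0 : ℝ)) = 0 := by
  obtain ⟨⟨t1, t2⟩, r⟩ := γ
  cases r <;> simp [dot2, PM.toPlane, PM.inv_def, PM.act] <;> push_cast <;> ring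

lemma id2_nonloop (gi gj γ : PM) (hr : γ.r = xor gi.r gj.r) (a b : ℝ × ℝ) :
    dot2 (a - PM.toPlane γ b) ((0 : ℝ), sgnb gi.r) +
    dot2 (b - PM.toPlane γ⁻¹ a) ((0 : ℝ), sgnb gj.r) = 0 := by
  obtain ⟨⟨t1, t2⟩, rγ⟩ := γ
  simp only at hr
  subst hr
  cases hi : gi.r <;> cases hj : gj.r <;>
    simp [dot2, PM.toPlane, PM.inv_def, PM.act, sgnb] <;> push_cast <;> ring

lemma id2_loop (γ : PM) (hr : γ.r = false) (s : ℝ) (a : ℝ × ℝ) :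
    dot2 (a + a - PM.toPlane γ a - PM.toPlane γ⁻¹ a) ((0 : ℝ), s) = 0 := by
  obtain ⟨⟨t1, t2⟩, rγ⟩ := γ
  simp only at hr
  subst hr
  simp only [dot2, PM.toPlane, PM.inv_def, PM.act, if_false, Bool.false_eq_true,
    Prod.fst_sub, Prod.snd_sub, Prod.fst_add, Prod.snd_add, Prod.fst_neg, Prod.snd_neg,
    Prod.fst_mul, Prod.snd_mul]
  push_cast
  ring

lemma id3_nonloop (gi gj : PM) (a b : ℝ × ℝ) :
    dot2 (a - PM.toPlane (gi⁻¹ * gj) b) (uvec gi a) +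
    dot2 (b - PM.toPlane (gi⁻¹ * gj)⁻¹ a) (uvec gj b) = 0 := by
  obtain ⟨⟨t1, t2⟩, ri⟩ := gi
  obtain ⟨⟨s1, s2⟩, rj⟩ := gj
  cases ri <;> cases rj <;>
    simp [dot2, PM.toPlane, PM.inv_def, PM.mul_def, PM.act, uvec, sgnb] <;>
      push_cast <;> ring

end Rows
section Orth
variable {α β : Type} [DecidableEq α]

lemma orth1 {G : Multigraph α β} (m : β → PM) (q : α → ℝ × ℝ)
    (e : {e // e ∈ G.edges}) :
    ∑ c : {v // v ∈ G.verts} × Fin 2,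
      orbitMatrix G m q e c * colVec G (fun _ => ((1 : ℝ), (0 : ℝ))) c = 0 := by
  rw [dot_row]
  split_ifs with hij
  · exact id1_loop _ _
  · exact id1_nonloop _ _ _

lemma orth2 {G H : Multigraph α β} (hs : IsSubgraph H G) (m : β → PM)
    (hpp : PurelyPeriodic H m) (q : α → ℝ × ℝ)
    (e : {e // e ∈ G.edges}) (heH : e.1 ∈ H.edges) :
    ∑ c : {v // v ∈ G.verts} × Fin 2,
      orbitMatrix G m q e c *
        colVec G (fun v => ((0 : ℝ), sgnb ((pot H m v).r))) c = 0 := by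
  have hfst : H.fst e.1 = G.fst e.1 := (hs.2.2 e.1 heH).1
  have hsnd : H.snd e.1 = G.snd e.1 := (hs.2.2 e.1 heH).2
  have hr : (m e.1).r = xor (pot H m (G.fst e.1)).r (pot H m (G.snd e.1)).r := by
    rw [← hfst, ← hsnd]; exact pot_pp hpp heH
  rw [dot_row]
  split_ifs with hij
  · refine id2_loop _ ?_ _ _
    rw [hr, hij]
    simp
  · exact id2_nonloop _ _ _ hr _ _

lemma orth3 {G H : Multigraph α β} {m : β → PM} (hGm : IsGainGraph G m) (hs : IsSubgraph H G)
    (hb : Balanced H m) (q : α → ℝ × ℝ)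
    (e : {e // e ∈ G.edges}) (heH : e.1 ∈ H.edges) :
    ∑ c : {v // v ∈ G.verts} × Fin 2,
      orbitMatrix G m q e c * colVec G (fun v => uvec (pot H m v) (q v)) c = 0 := by
  have hfst : H.fst e.1 = G.fst e.1 := (hs.2.2 e.1 heH).1
  have hsnd : H.snd e.1 = G.snd e.1 := (hs.2.2 e.1 heH).2
  have hme : m e.1 = (pot H m (G.fst e.1))⁻¹ * pot H m (G.snd e.1) := by
    rw [← hfst, ← hsnd]; exact pot_balanced hb heH
  rw [dot_row]
  split_ifs with hij
  · exact absurd ((hfst.trans hij).trans hsnd.symm) (balanced_no_loop hGm hs hb heH)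
  · rw [hme]
    exact id3_nonloop _ _ _ _

end Orth

section LinAlg
open Module Function

/-- Abstract counting lemma: independent vectors annihilated by a surjection onto `ℝˡ`. -/
lemma abs_card {κ J : Type} [Fintype κ] [Fintype J] {l : ℕ}
    (w : κ → J → ℝ) (hw : LinearIndependent ℝ w)
    (T : (J → ℝ) →ₗ[ℝ] (Fin l → ℝ)) (hT : Function.Surjective T)
    (hker : ∀ k, T (w k) = 0) :
    Fintype.card κ + l ≤ Fintype.card J := by
  have h1 : LinearIndependent ℝ
      (fun k => (⟨w k, (LinearMap.mem_ker (f := T)).2 (hker k)⟩ : LinearMap.ker T)) := by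
    apply LinearIndependent.of_comp (LinearMap.ker T).subtype
    exact hw
  have h2 := h1.fintype_card_le_finrank
  have h3 := LinearMap.finrank_range_add_finrank_ker T
  have h4 : LinearMap.range T = ⊤ := LinearMap.range_eq_top.2 hT
  rw [h4] at h3
  simp only [finrank_top, Module.finrank_pi, Fintype.card_fin] at h3
  omega

/-- The linear map given by pairing with a finite family of vectors. -/
noncomputable def pairMap {J : Type} [Fintype J] {l : ℕ} (y : Fin l → J → ℝ) :
    (J → ℝ) →ₗ[ℝ] (Fin l → ℝ) where
  toFun x := fun j => ∑ c, x c * y j c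
  map_add' x x' := by
    funext j
    simp [add_mul, Finset.sum_add_distrib]
  map_smul' r x := by
    funext j
    simp [Finset.mul_sum, mul_assoc]

lemma pairMap_single {J : Type} [Fintype J] [DecidableEq J] {l : ℕ}
    (y : Fin l → J → ℝ) (c₀ : J) (r : ℝ) (j : Fin l) :
    pairMap y (Pi.single c₀ r) j = r * y j c₀ := by
  simp only [pairMap, LinearMap.coe_mk, AddHom.coe_mk]
  rw [Finset.sum_eq_single c₀]
  · simp
  · intro b _ hb
    rw [Pi.single_eq_of_ne hb]
    simp
  · intro h; exact absurd (Finset.mem_univ _) h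

end LinAlg
section Bound
variable {α β : Type} [DecidableEq α]

/-- Inclusion of subgraph columns into ambient columns. -/
def embJ (G H : Multigraph α β) :
    ({w : {v // v ∈ G.verts} // w.1 ∈ H.verts} × Fin 2) → ({v // v ∈ G.verts} × Fin 2) :=
  fun c => (c.1.1, c.2)

lemma embJ_inj (G H : Multigraph α β) : Function.Injective (embJ G H) := by
  intro a b h
  obtain ⟨h1, h2⟩ := Prod.ext_iff.1 h
  exact Prod.ext (Subtype.ext h1) h2

lemma bound_main {l : ℕ} {G : Multigraph α β} (m : β → PM) (H : Multigraph α β)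
    (hsub : IsSubgraph H G) (q : α → ℝ × ℝ)
    (hind : LinearIndependent ℝ
      (fun k : {e // e ∈ H.edges} => orbitMatrix G m q ⟨k.1, hsub.2.1 k.2⟩))
    (Y : Fin l → α → ℝ × ℝ)
    (horth : ∀ (k : {e // e ∈ H.edges}) (j : Fin l),
      ∑ c : {v // v ∈ G.verts} × Fin 2,
        orbitMatrix G m q ⟨k.1, hsub.2.1 k.2⟩ c * colVec G (Y j) c = 0)
    (hsurj : Function.Surjective
      (pairMap (fun j c => colVec G (Y j) (embJ G H c)))) :
    (H.edges.card : ℤ) ≤ 2 * H.verts.card - l := by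
  classical
  have hsupp : ∀ (k : {e // e ∈ H.edges}) (c : {v // v ∈ G.verts} × Fin 2),
      c.1.1 ∉ H.verts → orbitMatrix G m q ⟨k.1, hsub.2.1 k.2⟩ c = 0 := by
    intro k c hc
    refine row_support m q _ c ?_ ?_
    · intro hh; apply hc
      rw [hh, ← (hsub.2.2 k.1 k.2).1]
      exact H.fst_mem _ k.2
    · intro hh; apply hc
      rw [hh, ← (hsub.2.2 k.1 k.2).2]
      exact H.snd_mem _ k.2
  have htrans : ∀ f : ({v // v ∈ G.verts} × Fin 2) → ℝ,
      (∀ c, c.1.1 ∉ H.verts → f c = 0) →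
      ∑ c, f (embJ G H c) = ∑ c, f c := by
    intro f hf
    rw [← Finset.sum_subset (Finset.subset_univ
      (Finset.univ.map ⟨embJ G H, embJ_inj G H⟩)) ?_]
    · rw [Finset.sum_map]; rfl
    · intro x _ hx
      apply hf
      intro hmem
      apply hx
      simp only [Finset.mem_map, Finset.mem_univ, true_and, Function.Embedding.coeFn_mk]
      exact ⟨⟨⟨x.1, hmem⟩, x.2⟩, rfl⟩
  set w : {e // e ∈ H.edges} → ({w : {v // v ∈ G.verts} // w.1 ∈ H.verts} × Fin 2) → ℝ :=
    fun k c => orbitMatrix G m q ⟨k.1, hsub.2.1 k.2⟩ (embJ G H c) with hw_def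
  have hw : LinearIndependent ℝ w := by
    rw [Fintype.linearIndependent_iff]
    intro g hg
    refine Fintype.linearIndependent_iff.1 hind g ?_
    funext c
    by_cases hc : c.1.1 ∈ H.verts
    · have := congrFun hg (⟨⟨c.1, hc⟩, c.2⟩ :
        {w : {v // v ∈ G.verts} // w.1 ∈ H.verts} × Fin 2)
      simpa [hw_def, embJ, Finset.sum_apply] using this
    · simp only [Finset.sum_apply, Pi.smul_apply, smul_eq_mul, Pi.zero_apply]
      apply Finset.sum_eq_zero
      intro k _
      rw [hsupp k c hc]
      simp
  have hker : ∀ k, pairMap (fun j c => colVec G (Y j) (embJ G H c)) (w k) = 0 := by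
    intro k
    funext j
    have := htrans (fun c => orbitMatrix G m q ⟨k.1, hsub.2.1 k.2⟩ c * colVec G (Y j) c)
      (fun c hc => by beta_reduce; rw [hsupp k c hc]; simp)
    simp only [pairMap, LinearMap.coe_mk, AddHom.coe_mk, hw_def, Pi.zero_apply]
    rw [this, horth k j]
  have habs := abs_card w hw _ hsurj hker
  have hcard1 : Fintype.card {e // e ∈ H.edges} = H.edges.card := Fintype.card_coe _
  have hequiv : {w : {v // v ∈ G.verts} // w.1 ∈ H.verts} ≃ {v // v ∈ H.verts} :=
    { toFun := fun w => ⟨w.1.1, w.2⟩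
      invFun := fun v => ⟨⟨v.1, hsub.1 v.2⟩, v.2⟩
      left_inv := fun w => by ext; rfl
      right_inv := fun v => rfl }
  have hcard2 : Fintype.card ({w : {v // v ∈ G.verts} // w.1 ∈ H.verts} × Fin 2) =
      2 * H.verts.card := by
    rw [Fintype.card_prod, Fintype.card_congr hequiv, Fintype.card_coe, Fintype.card_fin]
    ring
  rw [hcard1, hcard2] at habs
  omega

end Bound
section Surj
variable {J : Type} [Fintype J] [DecidableEq J]

lemma surjL1 (y : Fin 1 → J → ℝ) (c0 : J) (h : y 0 c0 = 1) :
    Function.Surjective (pairMap y) := by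
  intro z
  refine ⟨Pi.single c0 (z 0), funext fun j => ?_⟩
  fin_cases j
  show pairMap y (Pi.single c0 (z 0)) 0 = z 0
  rw [pairMap_single, h]
  ring

lemma surjL2 (y : Fin 2 → J → ℝ) (c0 c1 : J) (s : ℝ)
    (h00 : y 0 c0 = 1) (h10 : y 1 c0 = 0) (h01 : y 0 c1 = 0) (h11 : y 1 c1 = s)
    (hs : s * s = 1) :
    Function.Surjective (pairMap y) := by
  intro z
  refine ⟨Pi.single c0 (z 0) + Pi.single c1 (s * z 1), funext fun j => ?_⟩
  rw [map_add]
  fin_cases j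
  · show (pairMap y (Pi.single c0 (z 0)) + pairMap y (Pi.single c1 (s * z 1))) 0 = z 0
    rw [Pi.add_apply, pairMap_single, pairMap_single, h00, h01]
    ring
  · show (pairMap y (Pi.single c0 (z 0)) + pairMap y (Pi.single c1 (s * z 1))) 1 = z 1
    rw [Pi.add_apply, pairMap_single, pairMap_single, h10, h11]
    linear_combination z 1 * hs

lemma surjL3 (y : Fin 3 → J → ℝ) (c0 c1 c2 : J) (s1 s2 u11 u12 u22 : ℝ)
    (h00 : y 0 c0 = 1) (h10 : y 1 c0 = 0) (h20 : y 2 c0 = u11)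
    (h01 : y 0 c1 = 0) (h11 : y 1 c1 = s1) (h21 : y 2 c1 = u12)
    (h02 : y 0 c2 = 0) (h12 : y 1 c2 = s2) (h22 : y 2 c2 = u22)
    (hs1 : s1 * s1 = 1) (hs2 : s2 * s2 = 1) (hD : s1 * u12 ≠ s2 * u22) :
    Function.Surjective (pairMap y) := by
  intro z
  have hD' : s2 * u22 - s1 * u12 ≠ 0 := sub_ne_zero.2 (Ne.symm hD)
  have hsol : ∃ b cc : ℝ, b + cc = z 1 ∧
      z 0 * u11 + b * (s1 * u12) + cc * (s2 * u22) = z 2 := by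
    refine ⟨z 1 - (z 2 - z 0 * u11 - z 1 * (s1 * u12)) / (s2 * u22 - s1 * u12),
      (z 2 - z 0 * u11 - z 1 * (s1 * u12)) / (s2 * u22 - s1 * u12), by ring, ?_⟩
    field_simp
    ring
  obtain ⟨b, cc, hbc1, hbc2⟩ := hsol
  refine ⟨Pi.single c0 (z 0) + Pi.single c1 (s1 * b) + Pi.single c2 (s2 * cc),
    funext fun j => ?_⟩
  rw [map_add, map_add]
  fin_cases j
  · show (pairMap y (Pi.single c0 (z 0)) + pairMap y (Pi.single c1 (s1 * b)) +
        pairMap y (Pi.single c2 (s2 * cc))) 0 = z 0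
    rw [Pi.add_apply, Pi.add_apply, pairMap_single, pairMap_single, pairMap_single,
      h00, h01, h02]
    ring
  · show (pairMap y (Pi.single c0 (z 0)) + pairMap y (Pi.single c1 (s1 * b)) +
        pairMap y (Pi.single c2 (s2 * cc))) 1 = z 1
    rw [Pi.add_apply, Pi.add_apply, pairMap_single, pairMap_single, pairMap_single,
      h10, h11, h12]
    linear_combination b * hs1 + cc * hs2 + hbc1
  · show (pairMap y (Pi.single c0 (z 0)) + pairMap y (Pi.single c1 (s1 * b)) +
        pairMap y (Pi.single c2 (s2 * cc))) 2 = z 2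
    rw [Pi.add_apply, Pi.add_apply, pairMap_single, pairMap_single, pairMap_single,
      h20, h21, h22]
    linear_combination hbc2

end Surj

section RankCount
variable {α β : Type} [DecidableEq α]

lemma rank_eq_card {G : Multigraph α β} (m : β → PM) (p : α → ℝ × ℝ)
    (hli : LinearIndependent ℝ (fun er => orbitMatrix G m p er)) :
    (orbitMatrix G m p).rank = G.edges.card := by
  have h := LinearIndependent.rank_matrix (M := orbitMatrix G m p) hli
  rw [h, Fintype.card_coe]

lemma pp_of_balanced {H : Multigraph α β} {m : β → PM} (hb : Balanced H m) :
    PurelyPeriodic H m := by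
  intro u L hL
  rw [hb u L hL]
  rfl

lemma orbitMatrix_affine {G : Multigraph α β} (m : β → PM) (p d : α → ℝ × ℝ) (s : ℝ)
    (er : {e // e ∈ G.edges}) (c : {v // v ∈ G.verts} × Fin 2) :
    orbitMatrix G m (fun v => p v + s • d v) er c =
      orbitMatrix G m p er c +
        s * (orbitMatrix G m (fun v => p v + d v) er c - orbitMatrix G m p er c) := by
  simp only [orbitMatrix, PM.toPlane, Prod.fst_add, Prod.snd_add, Prod.smul_fst,
    Prod.smul_snd, smul_eq_mul]
  split_ifs <;>
    simp only [Prod.fst_add, Prod.snd_add, Prod.fst_sub, Prod.snd_sub, Prod.smul_fst,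
      Prod.smul_snd, smul_eq_mul, Prod.fst_zero, Prod.snd_zero] <;>
    ring

end RankCount

lemma fin2_cases : ∀ j : Fin 2, j = 0 ∨ j = 1 := by decide

lemma fin3_cases : ∀ j : Fin 3, j = 0 ∨ j = 1 ∨ j = 2 := by decide


/-- Every minimally rigid `ℤ²⋊𝒞ₛ`-gain graph is `ℤ²⋊𝒞ₛ`-tight. -/
theorem tight_of_minimallyRigid {α β : Type} [DecidableEq α]
    (G : Multigraph α β) (m : β → PM) (hGm : IsGainGraph G m)
    (h : MinimallyRigid G m) : PMTight G m := by
  classical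
  obtain ⟨⟨p1, hgen1, hrank1⟩, p2, hgen2, hli⟩ := h
  have hranks : (orbitMatrix G m p2).rank = (orbitMatrix G m p1).rank :=
    le_antisymm (hgen1 p2) (hgen2 p1)
  have hcount : (G.edges.card : ℤ) = 2 * G.verts.card - 1 := by
    have h1 := rank_eq_card m p2 hli
    have h2 : ((orbitMatrix G m p2).rank : ℤ) = 2 * G.verts.card - 1 := by
      rw [hranks]; exact hrank1
    rw [← h2]
    exact_mod_cast congrArg (Nat.cast : ℕ → ℤ) h1.symm
  have hindH : ∀ (H : Multigraph α β) (hsub : IsSubgraph H G),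
      LinearIndependent ℝ
        (fun k : {e // e ∈ H.edges} => orbitMatrix G m p2 ⟨k.1, hsub.2.1 k.2⟩) :=
    fun H hsub => by
      have hc := hli.comp
        (fun k : {e // e ∈ H.edges} => (⟨k.1, hsub.2.1 k.2⟩ : {e // e ∈ G.edges}))
        (fun a b hab => by
          apply Subtype.ext
          have h2 := congrArg Subtype.val hab
          simpa using h2)
      exact hc
  -- (2,1)-sparsity of G
  have hsparse21 : Sparse 2 1 G := by
    intro H hsub hcard
    obtain ⟨e0, he0⟩ := Finset.card_pos.1 hcard
    have hv0 : H.fst e0 ∈ H.verts := H.fst_mem _ he0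
    have hsurj : Function.Surjective (pairMap (fun (j : Fin 1) c =>
        colVec G ((fun (_ : Fin 1) (_ : α) => ((1:ℝ),(0:ℝ))) j) (embJ G H c))) := by
      apply surjL1 _ ((⟨⟨H.fst e0, hsub.1 hv0⟩, hv0⟩, 0))
      simp [colVec, embJ]
    have hb := bound_main (l := 1) m H hsub p2 (hindH H hsub)
      (fun _ _ => ((1:ℝ),(0:ℝ))) (fun k j => orth1 m p2 _) hsurj
    exact_mod_cast hb
  -- purely periodic subgraphs
  have hpp22 : ∀ H : Multigraph α β, IsSubgraph H G → PurelyPeriodic H m →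
      Sparse 2 2 H := by
    intro H hsubH hppH K hsubK hcard
    have hsub : IsSubgraph K G := isSubgraph_trans hsubK hsubH
    have hppK : PurelyPeriodic K m := purelyPeriodic_mono hsubK hppH
    obtain ⟨e0, he0⟩ := Finset.card_pos.1 hcard
    have hv0 : K.fst e0 ∈ K.verts := K.fst_mem _ he0
    obtain ⟨Y, hY0, hY1⟩ : ∃ Y : Fin 2 → α → ℝ × ℝ,
        Y 0 = (fun _ => ((1:ℝ),(0:ℝ))) ∧
        Y 1 = (fun v => ((0:ℝ), sgnb ((pot K m v).r))) :=
      ⟨![fun _ => ((1:ℝ),(0:ℝ)), fun v => ((0:ℝ), sgnb ((pot K m v).r))], rfl, rfl⟩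
    have horth : ∀ (k : {e // e ∈ K.edges}) (j : Fin 2),
        ∑ c : {v // v ∈ G.verts} × Fin 2,
          orbitMatrix G m p2 ⟨k.1, hsub.2.1 k.2⟩ c * colVec G (Y j) c = 0 := by
      intro k j
      rcases fin2_cases j with rfl | rfl
      · rw [hY0]; exact orth1 m p2 _
      · rw [hY1]; exact orth2 hsub m hppK p2 _ k.2
    have hsurj : Function.Surjective (pairMap (fun j c =>
        colVec G (Y j) (embJ G K c))) := by
      apply surjL2 _ ((⟨⟨K.fst e0, hsub.1 hv0⟩, hv0⟩, 0))
        ((⟨⟨K.fst e0, hsub.1 hv0⟩, hv0⟩, 1)) (sgnb ((pot K m (K.fst e0)).r))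
      · simp [hY0, colVec, embJ]
      · simp [hY1, colVec, embJ]
      · simp [hY0, colVec, embJ]
      · simp [hY1, colVec, embJ]
      · exact sgnb_mul_self _
    have hb := bound_main (l := 2) m K hsub p2 (hindH K hsub) Y horth hsurj
    exact_mod_cast hb
  -- balanced subgraphs
  have hbal23 : ∀ H : Multigraph α β, IsSubgraph H G → Balanced H m →
      Sparse 2 3 H := by
    intro H hsubH hbH K hsubK hcard
    have hsub : IsSubgraph K G := isSubgraph_trans hsubK hsubH
    have hbK : Balanced K m := balanced_mono hsubK hbH
    have hppK : PurelyPeriodic K m := pp_of_balanced hbK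
    obtain ⟨e0, he0⟩ := Finset.card_pos.1 hcard
    have hw12 : K.fst e0 ≠ K.snd e0 := balanced_no_loop hGm hsub hbK he0
    have hw1 : K.fst e0 ∈ K.verts := K.fst_mem _ he0
    have hw2 : K.snd e0 ∈ K.verts := K.snd_mem _ he0
    set w1 := K.fst e0 with hw1def
    set w2 := K.snd e0 with hw2def
    set d : α → ℝ × ℝ := fun v => if v = w1 then ((1:ℝ), (0:ℝ)) else 0 with hd
    set F : ℝ → {e // e ∈ K.edges} → ({v // v ∈ G.verts} × Fin 2) → ℝ :=
      fun s k c => orbitMatrix G m p2 ⟨k.1, hsub.2.1 k.2⟩ c +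
        s * (orbitMatrix G m (fun v => p2 v + d v) ⟨k.1, hsub.2.1 k.2⟩ c -
             orbitMatrix G m p2 ⟨k.1, hsub.2.1 k.2⟩ c) with hF
    have hFs : ∀ s : ℝ, F s =
        fun k : {e // e ∈ K.edges} =>
          orbitMatrix G m (fun v => p2 v + s • d v) ⟨k.1, hsub.2.1 k.2⟩ := by
      intro s
      funext k c
      simp only [hF]
      exact (orbitMatrix_affine m p2 d s _ _).symm
    have hFcont : Continuous F := by
      apply continuous_pi; intro k; apply continuous_pi; intro c
      simp only [hF]
      fun_prop
    have hopen : IsOpen {f : {e // e ∈ K.edges} → ({v // v ∈ G.verts} × Fin 2) → ℝ |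
        LinearIndependent ℝ f} := isOpen_setOf_linearIndependent (𝕜 := ℝ)
    have hmem0 : F 0 ∈ {f : {e // e ∈ K.edges} → ({v // v ∈ G.verts} × Fin 2) → ℝ |
        LinearIndependent ℝ f} := by
      have h0 : F 0 = fun k : {e // e ∈ K.edges} =>
          orbitMatrix G m p2 ⟨k.1, hsub.2.1 k.2⟩ := by
        rw [hFs 0]
        funext k
        congr 1
        funext v
        simp
      rw [Set.mem_setOf_eq, h0]
      exact hindH K hsub
    obtain ⟨ε, hε, hball⟩ := Metric.isOpen_iff.1 (hopen.preimage hFcont) 0 hmem0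
    set cstar : ℝ := (p2 w2).1 + ((pot K m w2).t.1 : ℝ) - (p2 w1).1 -
      ((pot K m w1).t.1 : ℝ) with hcstar
    set s0 : ℝ := if ε / 2 = cstar then -(ε / 2) else ε / 2 with hs0
    have hs0mem : s0 ∈ Metric.ball (0:ℝ) ε := by
      rw [Metric.mem_ball, Real.dist_eq, sub_zero, hs0]
      split_ifs
      · rw [abs_neg, abs_of_pos (by linarith)]; linarith
      · rw [abs_of_pos (by linarith)]; linarith
    have hs0ne : s0 ≠ cstar := by
      rw [hs0]
      split_ifs with hh
      · intro hcon; rw [← hh] at hcon; linarith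
      · exact hh
    set q : α → ℝ × ℝ := fun v => p2 v + s0 • d v with hq
    have hindq : LinearIndependent ℝ (fun k : {e // e ∈ K.edges} =>
        orbitMatrix G m q ⟨k.1, hsub.2.1 k.2⟩) := by
      have hmem := hball hs0mem
      rw [Set.mem_preimage, Set.mem_setOf_eq, hFs s0] at hmem
      exact hmem
    have hq1 : q w1 = ((p2 w1).1 + s0, (p2 w1).2) := by
      simp only [hq, hd, if_pos rfl]
      ext <;> simp
    have hq2 : q w2 = p2 w2 := by
      simp only [hq, hd, if_neg (Ne.symm hw12)]
      simp
    have hWne : (PM.toPlane (pot K m w1) (q w1)).1 ≠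
        (PM.toPlane (pot K m w2) (q w2)).1 := by
      rw [hq1, hq2]
      simp only [PM.toPlane]
      intro hcon
      apply hs0ne
      rw [hcstar]
      linarith
    obtain ⟨Y, hY0, hY1, hY2⟩ : ∃ Y : Fin 3 → α → ℝ × ℝ,
        Y 0 = (fun _ => ((1:ℝ),(0:ℝ))) ∧
        Y 1 = (fun v => ((0:ℝ), sgnb ((pot K m v).r))) ∧
        Y 2 = (fun v => uvec (pot K m v) (q v)) :=
      ⟨![fun _ => ((1:ℝ),(0:ℝ)), fun v => ((0:ℝ), sgnb ((pot K m v).r)),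
        fun v => uvec (pot K m v) (q v)], rfl, rfl, rfl⟩
    have horth : ∀ (k : {e // e ∈ K.edges}) (j : Fin 3),
        ∑ c : {v // v ∈ G.verts} × Fin 2,
          orbitMatrix G m q ⟨k.1, hsub.2.1 k.2⟩ c * colVec G (Y j) c = 0 := by
      intro k j
      rcases fin3_cases j with rfl | rfl | rfl
      · rw [hY0]; exact orth1 m q _
      · rw [hY1]; exact orth2 hsub m hppK q _ k.2
      · rw [hY2]; exact orth3 hGm hsub hbK q _ k.2
    have he1 : sgnb ((pot K m w1).r) * (uvec (pot K m w1) (q w1)).2 =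
        (PM.toPlane (pot K m w1) (q w1)).1 := by
      simp only [uvec]
      rw [← mul_assoc, sgnb_mul_self, one_mul]
    have he2 : sgnb ((pot K m w2).r) * (uvec (pot K m w2) (q w2)).2 =
        (PM.toPlane (pot K m w2) (q w2)).1 := by
      simp only [uvec]
      rw [← mul_assoc, sgnb_mul_self, one_mul]
    have hsurj : Function.Surjective (pairMap (fun j c =>
        colVec G (Y j) (embJ G K c))) := by
      apply surjL3 _ ((⟨⟨w1, hsub.1 hw1⟩, hw1⟩, 0)) ((⟨⟨w1, hsub.1 hw1⟩, hw1⟩, 1))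
        ((⟨⟨w2, hsub.1 hw2⟩, hw2⟩, 1))
        (sgnb ((pot K m w1).r)) (sgnb ((pot K m w2).r))
        ((uvec (pot K m w1) (q w1)).1) ((uvec (pot K m w1) (q w1)).2)
        ((uvec (pot K m w2) (q w2)).2)
      · simp [hY0, colVec, embJ]
      · simp [hY1, colVec, embJ]
      · simp [hY2, colVec, embJ]
      · simp [hY0, colVec, embJ]
      · simp [hY1, colVec, embJ]
      · simp [hY2, colVec, embJ]
      · simp [hY0, colVec, embJ]
      · simp [hY1, colVec, embJ]
      · simp [hY2, colVec, embJ]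
      · exact sgnb_mul_self _
      · exact sgnb_mul_self _
      · rw [he1, he2]; exact hWne
    have hb := bound_main (l := 3) m K hsub q hindq Y horth hsurj
    exact_mod_cast hb
  refine ⟨⟨hsparse21, ?_⟩, hpp22, hbal23⟩
  exact_mod_cast hcount


end Crystal
end

section
/- Let (G,m) be a minimally rigid ℤ²⋊Cs-gain graph and let (G',m') be formed from (G,m) by a gained loop-1-extension. Then (G',m') is minimally rigid. -/
namespace Crystal

variable {α β : Type}

private lemma sum_subtype_eq' {β M : Type*} [AddCommMonoid M] {s : Finset β}
    (F : {e // e ∈ s} → M) (F' : β → M) (h : ∀ e (he : e ∈ s), F ⟨e, he⟩ = F' e) :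
    ∑ i : {e // e ∈ s}, F i = ∑ e ∈ s, F' e := by
  rw [Finset.univ_eq_attach, ← Finset.sum_attach s F']
  exact Finset.sum_congr rfl fun x _ => h x.1 x.2

/-- Gained loop-1-extensions preserve minimal rigidity. -/
theorem minimallyRigid_of_loopOneExtension {α β : Type} [DecidableEq α] [DecidableEq β]
    (G G' : Multigraph α β) (m m' : β → PM)
    (hGm : IsGainGraph G m) (hMR : MinimallyRigid G m)
    (hext : IsLoopOneExtension G m G' m') :
    MinimallyRigid G' m' := by
  classical
  obtain ⟨v₀, v₁, l, f, hv₀, hv₁, hlE, hfE, hlf, hV, hE, hold, hfstl, hsndl, hrl, hjf, hgg'⟩ :=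
    hext
  obtain ⟨⟨p₁, hgen₁, hrank₁⟩, ⟨p, hgen, hind⟩⟩ := hMR
  -- |E| = 2|V| - 1
  have hrankp : (orbitMatrix G m p).rank = G.edges.card := by
    rw [LinearIndependent.rank_matrix (M := orbitMatrix G m p) hind, Fintype.card_coe]
  have heq : (orbitMatrix G m p₁).rank = G.edges.card := by
    have h1 := hgen p₁
    have h2 := hgen₁ p
    omega
  rw [heq] at hrank₁
  -- basic membership facts
  have hv₀' : v₀ ∈ G'.verts := by rw [hV]; exact Finset.mem_insert_self _ _
  have hmemV : ∀ w ∈ G.verts, w ∈ G'.verts := fun w hw => by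
    rw [hV]; exact Finset.mem_insert_of_mem hw
  have hnev : ∀ w ∈ G.verts, w ≠ v₀ := fun w hw h => hv₀ (h ▸ hw)
  have hl' : l ∈ G'.edges := by rw [hE]; exact Finset.mem_insert_self _ _
  have hf' : f ∈ G'.edges := by
    rw [hE]; exact Finset.mem_insert_of_mem (Finset.mem_insert_self _ _)
  have hmemE : ∀ e ∈ G.edges, e ∈ G'.edges := fun e he => by
    rw [hE]; exact Finset.mem_insert_of_mem (Finset.mem_insert_of_mem he)
  have hv₁0 : v₁ ≠ v₀ := hnev v₁ hv₁
  -- the new placement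
  set c : ℝ × ℝ :=
    (if G'.fst f = v₀ then (p v₁).1 + ((m' f).t.1 : ℝ) + 1
      else (p v₁).1 - ((m' f).t.1 : ℝ) + 1,
     ((m' l).t.2 : ℝ) / 2 + 1) with hc
  set p' : α → ℝ × ℝ := fun v => if v = v₀ then c else p v with hp'
  have hp'v₀ : p' v₀ = c := by simp [hp']
  have hp'old : ∀ w ∈ G.verts, p' w = p w := fun w hw => by
    simp [hp', hnev w hw]
  -- entry computations for old edges
  have hOoldV : ∀ e (he : e ∈ G.edges) (w) (hw : w ∈ G.verts) (k : Fin 2),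
      orbitMatrix G' m' p' ⟨e, hmemE e he⟩ (⟨w, hmemV w hw⟩, k) =
        orbitMatrix G m p ⟨e, he⟩ (⟨w, hw⟩, k) := by
    intro e he w hw k
    obtain ⟨h1, h2, h3⟩ := hold e he
    simp only [orbitMatrix, h1, h2, h3,
      hp'old (G.fst e) (G.fst_mem e he), hp'old (G.snd e) (G.snd_mem e he)]
  have hOoldv₀ : ∀ e (he : e ∈ G.edges) (k : Fin 2),
      orbitMatrix G' m' p' ⟨e, hmemE e he⟩ (⟨v₀, hv₀'⟩, k) = 0 := by
    intro e he k
    obtain ⟨h1, h2, h3⟩ := hold e he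
    have hne1 : ¬ (v₀ = G.fst e) := fun h => hv₀ (h ▸ G.fst_mem e he)
    have hne2 : ¬ (v₀ = G.snd e) := fun h => hv₀ (h ▸ G.snd_mem e he)
    simp only [orbitMatrix, h1, h2, h3]
    split <;> simp [hne1, hne2]
  -- entry computations for the loop
  have hloopval : p' v₀ + p' v₀ - PM.toPlane (m' l) (p' v₀)
      - PM.toPlane (m' l)⁻¹ (p' v₀) = ((0 : ℝ), (4 : ℝ)) := by
    rw [hp'v₀, hc, Prod.ext_iff]
    constructor <;>
      · simp [PM.toPlane, PM.inv_def, PM.act, hrl, Prod.sub_def, Prod.add_def]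
        try ring
  have hOl : ∀ k : Fin 2,
      orbitMatrix G' m' p' ⟨l, hl'⟩ (⟨v₀, hv₀'⟩, k) = if k = 0 then 0 else 4 := by
    intro k
    simp only [orbitMatrix, hfstl, hsndl, if_pos rfl, hloopval]
    split <;> simp
  -- entry computation for the new edge at the new vertex, first coordinate
  have hOf0 : orbitMatrix G' m' p' ⟨f, hf'⟩ (⟨v₀, hv₀'⟩, (0 : Fin 2)) = 1 := by
    rcases hjf with ⟨hA1, hA2⟩ | ⟨hB1, hB2⟩
    · have hij : ¬ (G'.fst f = G'.snd f) := by rw [hA1, hA2]; exact fun h => hv₁0 h.symm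
      have hne01 : v₀ ≠ v₁ := Ne.symm hv₁0
      simp [orbitMatrix, hij, hA1, hA2, hne01, hp'v₀, hp'old v₁ hv₁, hc, PM.toPlane,
        Prod.sub_def]
    · have hij : ¬ (G'.fst f = G'.snd f) := by rw [hB1, hB2]; exact hv₁0
      have hne : ¬ (v₀ = G'.fst f) := by rw [hB1]; exact fun h => hv₁0 h.symm
      have : ¬ (G'.fst f = v₀) := fun h => hv₁0 (hB1 ▸ h)
      have hne01 : v₀ ≠ v₁ := Ne.symm hv₁0
      simp [orbitMatrix, hij, hB1, hB2, hv₁0, hne, hne01, this, hp'v₀, hp'old v₁ hv₁, hc,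
        PM.toPlane, PM.inv_def, PM.act, Prod.sub_def]
      ring
  -- linear independence of the rows of the extended orbit matrix
  have hindep' : LinearIndependent ℝ
      (fun er : {e // e ∈ G'.edges} => orbitMatrix G' m' p' er) := by
    rw [Fintype.linearIndependent_iff]
    intro a ha
    have hlnf : l ∉ insert f G.edges := by
      simp only [Finset.mem_insert]; rintro (h | h); exacts [hlf h, hlE h]
    have hcol : ∀ col, a ⟨l, hl'⟩ * orbitMatrix G' m' p' ⟨l, hl'⟩ col +
        (a ⟨f, hf'⟩ * orbitMatrix G' m' p' ⟨f, hf'⟩ col +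
          ∑ e ∈ G.edges, (if h : e ∈ G'.edges
            then a ⟨e, h⟩ * orbitMatrix G' m' p' ⟨e, h⟩ col else 0)) = 0 := by
      intro col
      have h0 := congrFun ha col
      rw [Finset.sum_apply] at h0
      simp only [Pi.smul_apply, smul_eq_mul, Pi.zero_apply] at h0
      set F' : β → ℝ := fun e => if h : e ∈ G'.edges
          then a ⟨e, h⟩ * orbitMatrix G' m' p' ⟨e, h⟩ col else 0 with hF'
      rw [sum_subtype_eq' _ F' (fun e he => by rw [hF']; simp only [dif_pos he])] at h0
      rw [hE, Finset.sum_insert hlnf, Finset.sum_insert hfE] at h0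
      have hFl : F' l = a ⟨l, hl'⟩ * orbitMatrix G' m' p' ⟨l, hl'⟩ col := by
        rw [hF']; simp only [dif_pos hl']
      have hFf : F' f = a ⟨f, hf'⟩ * orbitMatrix G' m' p' ⟨f, hf'⟩ col := by
        rw [hF']; simp only [dif_pos hf']
      rw [hFl, hFf] at h0
      exact h0
    have haf : a ⟨f, hf'⟩ = 0 := by
      have h1 := hcol (⟨v₀, hv₀'⟩, (0 : Fin 2))
      rw [hOl 0, hOf0, Finset.sum_eq_zero
        (fun e he => by rw [dif_pos (hmemE e he), hOoldv₀ e he, mul_zero])] at h1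
      simpa using h1
    have hal : a ⟨l, hl'⟩ = 0 := by
      have h1 := hcol (⟨v₀, hv₀'⟩, (1 : Fin 2))
      rw [hOl 1, haf, Finset.sum_eq_zero
        (fun e he => by rw [dif_pos (hmemE e he), hOoldv₀ e he, mul_zero])] at h1
      simp only [zero_mul, add_zero, zero_add] at h1
      have : (1 : Fin 2) ≠ 0 := by decide
      rw [if_neg this] at h1
      linarith
    -- old rows
    have hb : ∑ i : {e // e ∈ G.edges},
        (fun i : {e // e ∈ G.edges} => a ⟨i.1, hmemE i.1 i.2⟩) i • orbitMatrix G m p i = 0 := by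
      funext col
      obtain ⟨⟨w, hw⟩, k⟩ := col
      have h1 := hcol (⟨w, hmemV w hw⟩, k)
      rw [hal, haf, zero_mul, zero_mul, zero_add, zero_add] at h1
      rw [Finset.sum_apply]
      simp only [Pi.smul_apply, smul_eq_mul, Pi.zero_apply]
      rw [sum_subtype_eq' _ (fun e => if h : e ∈ G.edges
          then a ⟨e, hmemE e h⟩ * orbitMatrix G m p ⟨e, h⟩ (⟨w, hw⟩, k) else 0)
          (fun e he => by simp only [dif_pos he])]
      rw [← h1]
      refine Finset.sum_congr rfl fun e he => ?_
      rw [dif_pos he, dif_pos (hmemE e he), hOoldV e he w hw k]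
    have hbzero := Fintype.linearIndependent_iff.mp hind _ hb
    rintro ⟨e, he⟩
    rw [hE, Finset.mem_insert, Finset.mem_insert] at he
    rcases he with rfl | rfl | heG
    · exact hal
    · exact haf
    · exact hbzero ⟨e, heG⟩
  -- rank computation
  have hrank' : (orbitMatrix G' m' p').rank = G'.edges.card := by
    rw [LinearIndependent.rank_matrix (M := orbitMatrix G' m' p') hindep', Fintype.card_coe]
  have hgeneric : Generic G' m' p' := fun q => by
    rw [hrank', ← Fintype.card_coe G'.edges]
    exact (orbitMatrix G' m' q).rank_le_card_height
  have hVcard : G'.verts.card = G.verts.card + 1 := by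
    rw [hV]; exact Finset.card_insert_of_notMem hv₀
  have hEcard : G'.edges.card = G.edges.card + 2 := by
    rw [hE, Finset.card_insert_of_notMem, Finset.card_insert_of_notMem hfE]
    · simp only [Finset.mem_insert]; rintro (h | h); exacts [hlf h, hlE h]
  have hrankZ : ((orbitMatrix G' m' p').rank : ℤ) = 2 * G'.verts.card - 1 := by
    rw [hrank', hEcard, hVcard]
    push_cast
    omega
  exact ⟨⟨p', hgeneric, hrankZ⟩, ⟨p', hgeneric, hindep'⟩⟩

end Crystal
end
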